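/- Let A be an m×n real matrix with m > n > 1 and full column rank, fix l ∈ {1,…,n}, and set y = A(AᵀA)⁻¹e_l, where e_l is the l-th standard basis vector of ℝ^n. Then for every index j, the minimum over c ∈ ℝ of ‖A(c·e_j) − y‖² equals ‖y‖² − 1/(AᵀA)_{ll} when j = l, and equals ‖y‖² when j ≠ l. In particular, the unique single column of A whose span best approximates y is the l-th column. -/

import Mathlib

open Matrix

/-- The Euclidean norm of a vector in `Fin m → ℝ`. -/
noncomputable def euclNorm {m : ℕ} (v : Fin m → ℝ) : ℝ :=
  Real.sqrt (∑ i, v i ^ 2)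

lemma inf_quad (q b r : ℝ) (hq : 0 < q) :
    (⨅ c : ℝ, q * c ^ 2 - 2 * b * c + r) = r - b ^ 2 / q := by
  have key : ∀ c : ℝ, r - b ^ 2 / q ≤ q * c ^ 2 - 2 * b * c + r := by
    intro c
    have h0 : 0 ≤ q * c ^ 2 - 2 * b * c + b ^ 2 / q := by
      have h1 : q * c ^ 2 - 2 * b * c + b ^ 2 / q = (q * c - b) ^ 2 / q := by
        field_simp; ring
      rw [h1]; positivity
    linarith
  have hbdd : BddBelow (Set.range fun c : ℝ => q * c ^ 2 - 2 * b * c + r) :=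
    ⟨r - b ^ 2 / q, by rintro x ⟨c, rfl⟩; exact key c⟩
  apply le_antisymm
  · calc (⨅ c : ℝ, q * c ^ 2 - 2 * b * c + r) ≤ q * (b / q) ^ 2 - 2 * b * (b / q) + r :=
          ciInf_le hbdd (b / q)
      _ = r - b ^ 2 / q := by field_simp; ring
  · exact le_ciInf key

theorem stmt_11 {m n : ℕ} (hmn : n < m) (hn : 1 < n)
    (A : Matrix (Fin m) (Fin n) ℝ) (hrank : A.rank = n) (l : Fin n)
    (y : Fin m → ℝ)
    (hy : y = A.mulVec ((Aᵀ * A)⁻¹.mulVec (Pi.single l 1))) :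
    (∀ j : Fin n,
        (⨅ c : ℝ, euclNorm (A.mulVec (fun i => if i = j then c else 0) - y) ^ 2) =
          if j = l then euclNorm y ^ 2 - 1 / (Aᵀ * A) l l else euclNorm y ^ 2) ∧
      ∀ j : Fin n, j ≠ l →
        (⨅ c : ℝ, euclNorm (A.mulVec (fun i => if i = l then c else 0) - y) ^ 2) <
          ⨅ c : ℝ, euclNorm (A.mulVec (fun i => if i = j then c else 0) - y) ^ 2 := by
  -- the kernel of A is trivial
  have hker : LinearMap.ker A.mulVecLin = ⊥ := by
    have h1 := LinearMap.finrank_range_add_finrank_ker A.mulVecLin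
    rw [Matrix.rank] at hrank
    have h2 : Module.finrank ℝ (Fin n → ℝ) = n := by simp
    have h3 : Module.finrank ℝ (LinearMap.ker A.mulVecLin) = 0 := by omega
    exact Submodule.finrank_eq_zero.mp h3
  have hAinj : Function.Injective A.mulVec := by
    have := LinearMap.ker_eq_bot.mp hker
    exact this
  -- AᵀA is a unit
  have hunit : IsUnit (Aᵀ * A) := by
    apply Matrix.mulVec_injective_iff_isUnit.mp
    have h := Matrix.ker_mulVecLin_transpose_mul_self A
    have := LinearMap.ker_eq_bot.mp (h.trans hker)
    exact this
  have hdet : IsUnit (Aᵀ * A).det := (Matrix.isUnit_iff_isUnit_det _).mp hunit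
  set q : Fin n → ℝ := fun j => ∑ i, A i j ^ 2 with hqdef
  set b : Fin n → ℝ := fun j => ∑ i, A i j * y i with hbdef
  set r : ℝ := ∑ i, y i ^ 2 with hrdef
  -- positivity of q
  have hq : ∀ j, 0 < q j := by
    intro j
    rcases (Finset.sum_nonneg fun i _ => sq_nonneg (A i j)).lt_or_eq with h | h
    · exact h
    · exfalso
      have hz : ∀ i, A i j = 0 := by
        intro i
        have := (Finset.sum_eq_zero_iff_of_nonneg fun i _ => sq_nonneg (A i j)).mp h.symm
        exact sq_eq_zero_iff.mp (this i (Finset.mem_univ i))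
      have hcol : A.mulVec (Pi.single j 1) = A.mulVec 0 := by
        funext i
        simp [Matrix.mulVec, dotProduct, Pi.single_apply, hz i]
      have := hAinj hcol
      have := congrFun this j
      simp at this
  -- b j = δ_{jl}
  have hAty : Aᵀ.mulVec y = Pi.single l 1 := by
    rw [hy, Matrix.mulVec_mulVec, Matrix.mulVec_mulVec,
      Matrix.mul_nonsing_inv _ hdet, Matrix.one_mulVec]
  have hb : ∀ j, b j = if j = l then 1 else 0 := by
    intro j
    have h1 : Aᵀ.mulVec y j = b j := by
      simp [Matrix.mulVec, dotProduct, Matrix.transpose_apply, hbdef]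
    rw [hAty] at h1
    rw [← h1, Pi.single_apply]
  have hql : q l = (Aᵀ * A) l l := by
    simp [Matrix.mul_apply, Matrix.transpose_apply, hqdef, sq]
  -- the quadratic form of the objective
  have hform : ∀ (j : Fin n) (c : ℝ),
      euclNorm (A.mulVec (fun i => if i = j then c else 0) - y) ^ 2
        = q j * c ^ 2 - 2 * b j * c + r := by
    intro j c
    have hmv : ∀ i, A.mulVec (fun k => if k = j then c else 0) i = c * A i j := by
      intro i
      simp only [Matrix.mulVec, dotProduct, mul_ite, mul_zero]
      rw [Finset.sum_ite_eq' Finset.univ j (fun k => A i k * c)]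
      simp [mul_comm]
    rw [euclNorm, Real.sq_sqrt (Finset.sum_nonneg fun i _ => sq_nonneg _)]
    have : ∀ i : Fin m, (A.mulVec (fun k => if k = j then c else 0) - y) i ^ 2
        = (A i j ^ 2) * c ^ 2 - (A i j * y i) * (2 * c) + y i ^ 2 := by
      intro i
      rw [Pi.sub_apply, hmv i]
      ring
    rw [Finset.sum_congr rfl fun i _ => this i]
    simp only [Finset.sum_add_distrib, Finset.sum_sub_distrib, ← Finset.sum_mul,
      hqdef, hbdef, hrdef]
    ring
  have hinf : ∀ j : Fin n,
      (⨅ c : ℝ, euclNorm (A.mulVec (fun i => if i = j then c else 0) - y) ^ 2)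
        = r - (b j) ^ 2 / q j := by
    intro j
    simp only [hform j]
    exact inf_quad _ _ _ (hq j)
  have hr : euclNorm y ^ 2 = r := by
    rw [euclNorm, Real.sq_sqrt (Finset.sum_nonneg fun i _ => sq_nonneg _)]
  constructor
  · intro j
    rw [hinf j, hr, hb j]
    by_cases hjl : j = l
    · simp [hjl, hql, one_pow]
    · simp [hjl]
  · intro j hjl
    rw [hinf j, hinf l, hb j, hb l]
    rw [if_pos rfl, if_neg hjl]
    have h1 : 0 < (1 : ℝ) ^ 2 / q l := div_pos (by norm_num) (hq l)
    have h2 : (0 : ℝ) ^ 2 / q j = 0 := by simp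
    rw [h2]
    linarith
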